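/- Let p > 1 be a real number. Then for every integer h ≥ 1, (∑_{j=h+1}^∞ j^{−p}) · ∏_{j=2}^{h} (1 + j^{−p} / (j^{p−1} · ∑_{i=j}^∞ i^{−p})) ≤ e · p/(p−1). -/

import Mathlib

open Real Filter Finset

/-- MVT bounds: for `1 ≤ a` and `1 < p`,
`(p-1)(a+1)^{-p} ≤ a^{1-p} - (a+1)^{1-p} ≤ (p-1) a^{-p}`. -/
lemma key_mvt (p a : ℝ) (hp : 1 < p) (ha : 1 ≤ a) :
    (p - 1) * (a + 1) ^ (-p) ≤ a ^ (1 - p) - (a + 1) ^ (1 - p) ∧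
    a ^ (1 - p) - (a + 1) ^ (1 - p) ≤ (p - 1) * a ^ (-p) := by
  have hab : a < a + 1 := by linarith
  have hcont : ContinuousOn (fun x : ℝ => x ^ (1 - p)) (Set.Icc a (a + 1)) := by
    apply ContinuousOn.rpow_const continuousOn_id
    intro x hx
    refine Or.inl ?_
    simp only [id_eq]
    rcases hx with ⟨h1, _⟩
    intro h0; rw [h0] at h1; linarith
  have hderiv : ∀ x ∈ Set.Ioo a (a + 1),
      HasDerivAt (fun x : ℝ => x ^ (1 - p)) ((1 - p) * x ^ (-p)) x := by
    intro x hx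
    have hx0 : x ≠ 0 := by rcases hx with ⟨h1, _⟩; intro h0; rw [h0] at h1; linarith
    have := Real.hasDerivAt_rpow_const (x := x) (p := 1 - p) (Or.inl hx0)
    simpa [sub_sub_cancel_left, show (1 : ℝ) - p - 1 = -p by ring] using this
  obtain ⟨c, hc, hceq⟩ := exists_hasDerivAt_eq_slope (fun x : ℝ => x ^ (1 - p))
    (fun x => (1 - p) * x ^ (-p)) hab hcont hderiv
  have hslope : (1 - p) * c ^ (-p) = (a + 1) ^ (1 - p) - a ^ (1 - p) := by
    rw [hceq]; field_simp; ring
  have hdiff : a ^ (1 - p) - (a + 1) ^ (1 - p) = (p - 1) * c ^ (-p) := by nlinarith [hslope]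
  have hcpos : 0 < c := lt_of_lt_of_le (by linarith) hc.1.le
  have h1 : (a + 1) ^ (-p) ≤ c ^ (-p) :=
    Real.rpow_le_rpow_of_nonpos hcpos hc.2.le (by linarith)
  have h2 : c ^ (-p) ≤ a ^ (-p) :=
    Real.rpow_le_rpow_of_nonpos (by linarith) hc.1.le (by linarith)
  constructor
  · rw [hdiff]; exact mul_le_mul_of_nonneg_left h1 (by linarith)
  · rw [hdiff]; exact mul_le_mul_of_nonneg_left h2 (by linarith)

/-- Telescoping sum: `∑_k ((a+k)^{1-p} - (a+k+1)^{1-p}) = a^{1-p}`. -/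
lemma telescope_hasSum (p a : ℝ) (hp : 1 < p) (ha : 1 ≤ a) :
    HasSum (fun k : ℕ => (a + k) ^ (1 - p) - (a + (k + 1)) ^ (1 - p)) (a ^ (1 - p)) := by
  set f : ℕ → ℝ := fun k => (a + k) ^ (1 - p) with hf
  have hnonneg : ∀ k : ℕ, 0 ≤ f k - f (k + 1) := by
    intro k
    have : (a + (k + 1) : ℝ) ^ (1 - p) ≤ (a + k) ^ (1 - p) := by
      apply Real.rpow_le_rpow_of_nonpos (by positivity) (by push_cast; linarith) (by linarith)
    simp only [hf]
    push_cast
    linarith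
  have hlim : Tendsto f atTop (nhds 0) := by
    have h1 : Tendsto (fun k : ℕ => a + (k : ℝ)) atTop atTop :=
      tendsto_atTop_add_const_left _ _ tendsto_natCast_atTop_atTop
    have h2 := (tendsto_rpow_neg_atTop (y := p - 1) (by linarith)).comp h1
    simpa [hf, neg_sub, Function.comp_def] using h2
  have hrw : (fun k : ℕ => (a + k) ^ (1 - p) - (a + (k + 1)) ^ (1 - p))
      = (fun k : ℕ => f k - f (k + 1)) := by
    funext k
    simp only [hf, Nat.cast_add, Nat.cast_one]
  rw [hrw]
  rw [hasSum_iff_tendsto_nat_of_nonneg hnonneg]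
  have : ∀ n : ℕ, ∑ i ∈ range n, (f i - f (i + 1)) = f 0 - f n :=
    fun n => Finset.sum_range_sub' f n
  simp only [this]
  have : Tendsto (fun n => f 0 - f n) atTop (nhds (f 0 - 0)) :=
    (tendsto_const_nhds).sub hlim
  simpa [hf] using this

lemma summable_shift (p : ℝ) (hp : 1 < p) (j : ℕ) :
    Summable (fun k : ℕ => ((j + k : ℕ) : ℝ) ^ (-p)) := by
  have h := (Real.summable_nat_rpow (p := -p)).2 (by linarith)
  have h2 := (summable_nat_add_iff j).2 h
  apply h2.congr
  intro k
  congr 1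
  push_cast
  ring

/-- Lower bound on the tail: `j^{1-p}/(p-1) ≤ ∑_{i≥j} i^{-p}`. -/
lemma tail_lower (p : ℝ) (hp : 1 < p) (j : ℕ) (hj : 1 ≤ j) :
    ((j : ℝ)) ^ (1 - p) / (p - 1) ≤ ∑' k : ℕ, ((j + k : ℕ) : ℝ) ^ (-p) := by
  have hj1 : (1 : ℝ) ≤ (j : ℝ) := by exact_mod_cast hj
  have hts := telescope_hasSum p j hp hj1
  have hsum := hts.tsum_eq
  rw [div_le_iff₀ (by linarith), ← hsum, ← tsum_mul_right]
  apply Summable.tsum_le_tsum _ hts.summable ((summable_shift p hp j).mul_right _)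
  intro k
  have hk : (1 : ℝ) ≤ (j : ℝ) + k := by
    have : (0:ℝ) ≤ (k:ℝ) := Nat.cast_nonneg k
    linarith
  have hkey := (key_mvt p ((j : ℝ) + k) hp hk).2
  have hc1 : ((j + k : ℕ) : ℝ) = (j : ℝ) + k := by push_cast; ring
  have hc2 : ((j : ℝ) + ((k : ℝ) + 1)) = ((j : ℝ) + k) + 1 := by ring
  rw [hc1, hc2]
  have hm : (p - 1) * ((j:ℝ) + k) ^ (-p) = ((j:ℝ) + k) ^ (-p) * (p - 1) := by ring
  linarith [hkey, hm.le]

/-- Upper bound on the tail: `∑_{i≥j+1} i^{-p} ≤ j^{1-p}/(p-1)`. -/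
lemma tail_upper (p : ℝ) (hp : 1 < p) (j : ℕ) (hj : 1 ≤ j) :
    (∑' k : ℕ, ((j + 1 + k : ℕ) : ℝ) ^ (-p)) ≤ ((j : ℝ)) ^ (1 - p) / (p - 1) := by
  have hj1 : (1 : ℝ) ≤ (j : ℝ) := by exact_mod_cast hj
  have hts := telescope_hasSum p j hp hj1
  have hsum := hts.tsum_eq
  rw [le_div_iff₀ (by linarith), ← hsum, ← tsum_mul_right]
  apply Summable.tsum_le_tsum _ ((summable_shift p hp (j+1)).mul_right _) hts.summable
  intro k
  have hk : (1 : ℝ) ≤ (j : ℝ) + k := by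
    have : (0:ℝ) ≤ (k:ℝ) := Nat.cast_nonneg k
    linarith
  have hkey := (key_mvt p ((j : ℝ) + k) hp hk).1
  have hc1 : ((j + 1 + k : ℕ) : ℝ) = ((j : ℝ) + k) + 1 := by push_cast; ring
  have hc2 : ((j : ℝ) + ((k : ℝ) + 1)) = ((j : ℝ) + k) + 1 := by ring
  rw [hc1, hc2]
  nlinarith [hkey]

/-- For `p > 1` and `h ≥ 1`,
`(∑_{j=h+1}^∞ j^{−p}) · ∏_{j=2}^{h} (1 + j^{−p}/(j^{p−1}·∑_{i=j}^∞ i^{−p})) ≤ e·p/(p−1)`. -/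
theorem stmt_10 (p : ℝ) (hp : 1 < p) (h : ℕ) (hh : 1 ≤ h) :
    (∑' k : ℕ, ((h + 1 + k : ℕ) : ℝ) ^ (-p)) *
      ∏ j ∈ Finset.Icc 2 h,
        (1 + (j : ℝ) ^ (-p) / ((j : ℝ) ^ (p - 1) * ∑' i : ℕ, ((j + i : ℕ) : ℝ) ^ (-p)))
      ≤ Real.exp 1 * p / (p - 1) := by
  have hp1 : (0:ℝ) < p - 1 := by linarith
  -- tail bound
  have htail : (∑' k : ℕ, ((h + 1 + k : ℕ) : ℝ) ^ (-p)) ≤ 1 / (p - 1) := by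
    refine (tail_upper p hp h hh).trans ?_
    gcongr
    calc ((h:ℝ)) ^ (1 - p) ≤ (1:ℝ) ^ (1 - p) :=
          Real.rpow_le_rpow_of_nonpos one_pos (by exact_mod_cast hh) (by linarith)
      _ = 1 := Real.one_rpow _
  have htail0 : 0 ≤ ∑' k : ℕ, ((h + 1 + k : ℕ) : ℝ) ^ (-p) :=
    tsum_nonneg fun k => Real.rpow_nonneg (Nat.cast_nonneg _) _
  -- factor bound
  have hfac : ∀ j ∈ Finset.Icc 2 h,
      (1 + (j : ℝ) ^ (-p) / ((j : ℝ) ^ (p - 1) * ∑' i : ℕ, ((j + i : ℕ) : ℝ) ^ (-p)))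
        ≤ Real.exp ((p - 1) * (j : ℝ) ^ (-p)) := by
    intro j hj
    rw [Finset.mem_Icc] at hj
    have hj1 : (1:ℕ) ≤ j := le_trans (by norm_num) hj.1
    have hjR : (1:ℝ) ≤ (j:ℝ) := by exact_mod_cast hj1
    have hjpos : (0:ℝ) < (j:ℝ) := by linarith
    have hΓ := tail_lower p hp j hj1
    have hΓpos : (0:ℝ) < ∑' i : ℕ, ((j + i : ℕ) : ℝ) ^ (-p) :=
      lt_of_lt_of_le (by positivity) hΓ
    have hdenom : 1 / (p - 1) ≤ (j : ℝ) ^ (p - 1) * ∑' i : ℕ, ((j + i : ℕ) : ℝ) ^ (-p) := by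
      have h1 : (j : ℝ) ^ (p - 1) * ((j : ℝ) ^ (1 - p) / (p - 1))
          ≤ (j : ℝ) ^ (p - 1) * ∑' i : ℕ, ((j + i : ℕ) : ℝ) ^ (-p) :=
        mul_le_mul_of_nonneg_left hΓ (Real.rpow_nonneg hjpos.le _)
      have h2 : (j : ℝ) ^ (p - 1) * (j : ℝ) ^ (1 - p) = 1 := by
        rw [← Real.rpow_add hjpos]; norm_num
      calc 1 / (p - 1) = (j : ℝ) ^ (p - 1) * ((j : ℝ) ^ (1 - p) / (p - 1)) := by
            rw [mul_div_assoc'] at *; rw [h2]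
        _ ≤ _ := h1
    have hdpos : (0:ℝ) < (j : ℝ) ^ (p - 1) * ∑' i : ℕ, ((j + i : ℕ) : ℝ) ^ (-p) := by
      positivity
    have hstep : (j : ℝ) ^ (-p) / ((j : ℝ) ^ (p - 1) * ∑' i : ℕ, ((j + i : ℕ) : ℝ) ^ (-p))
        ≤ (p - 1) * (j : ℝ) ^ (-p) := by
      rw [div_le_iff₀ hdpos]
      calc (j : ℝ) ^ (-p) = ((p - 1) * (j : ℝ) ^ (-p)) * (1 / (p - 1)) := by
            field_simp
        _ ≤ ((p - 1) * (j : ℝ) ^ (-p)) * ((j : ℝ) ^ (p - 1) * ∑' i : ℕ, ((j + i : ℕ) : ℝ) ^ (-p)) := by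
            apply mul_le_mul_of_nonneg_left hdenom
            positivity
    calc 1 + (j : ℝ) ^ (-p) / ((j : ℝ) ^ (p - 1) * ∑' i : ℕ, ((j + i : ℕ) : ℝ) ^ (-p))
        ≤ 1 + (p - 1) * (j : ℝ) ^ (-p) := by linarith
      _ ≤ Real.exp ((p - 1) * (j : ℝ) ^ (-p)) := by
          have := Real.add_one_le_exp ((p - 1) * (j : ℝ) ^ (-p)); linarith
  -- product bound
  have hprod : (∏ j ∈ Finset.Icc 2 h,
      (1 + (j : ℝ) ^ (-p) / ((j : ℝ) ^ (p - 1) * ∑' i : ℕ, ((j + i : ℕ) : ℝ) ^ (-p))))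
      ≤ Real.exp (∑ j ∈ Finset.Icc 2 h, (p - 1) * (j : ℝ) ^ (-p)) := by
    rw [Real.exp_sum]
    apply Finset.prod_le_prod
    · intro j hj
      rw [Finset.mem_Icc] at hj
      have hj1 : (1:ℕ) ≤ j := le_trans (by norm_num) hj.1
      have hΓ := tail_lower p hp j hj1
      have hΓpos : (0:ℝ) < ∑' i : ℕ, ((j + i : ℕ) : ℝ) ^ (-p) := by
        refine lt_of_lt_of_le ?_ hΓ
        have hjR : (1:ℝ) ≤ (j:ℝ) := by exact_mod_cast hj1
        positivity
      have hjR : (1:ℝ) ≤ (j:ℝ) := by exact_mod_cast hj1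
      positivity
    · exact hfac
  -- sum bound: ∑_{j=2}^h (p-1) j^{-p} ≤ 1
  have hsumb : (∑ j ∈ Finset.Icc 2 h, (p - 1) * (j : ℝ) ^ (-p)) ≤ 1 := by
    have hterm : ∀ j : ℕ, 2 ≤ j →
        (p - 1) * (j : ℝ) ^ (-p) ≤ ((j:ℝ) - 1) ^ (1 - p) - (j : ℝ) ^ (1 - p) := by
      intro j hj
      have hjR : (2:ℝ) ≤ (j:ℝ) := by exact_mod_cast hj
      have := (key_mvt p ((j:ℝ) - 1) hp (by linarith)).1
      have heq : ((j:ℝ) - 1) + 1 = (j:ℝ) := by ring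
      rw [heq] at this
      linarith
    calc (∑ j ∈ Finset.Icc 2 h, (p - 1) * (j : ℝ) ^ (-p))
        ≤ ∑ j ∈ Finset.Icc 2 h, (((j:ℝ) - 1) ^ (1 - p) - (j : ℝ) ^ (1 - p)) := by
          apply Finset.sum_le_sum
          intro j hj
          rw [Finset.mem_Icc] at hj
          exact hterm j hj.1
      _ ≤ 1 := by
          rw [← Finset.Ico_add_one_right_eq_Icc, Finset.sum_Ico_eq_sum_range]
          set g : ℕ → ℝ := fun k => ((k:ℝ) + 1) ^ (1 - p) with hg
          have hform : ∀ i : ℕ, (((2 + i : ℕ):ℝ) - 1) ^ (1 - p) - ((2 + i : ℕ):ℝ) ^ (1 - p)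
              = g i - g (i + 1) := by
            intro i
            simp only [hg]
            push_cast
            ring_nf
          rw [Finset.sum_congr rfl (fun i _ => hform i), Finset.sum_range_sub' g]
          have hg0 : g 0 = 1 := by simp [hg]
          have hgnn : 0 ≤ g (h + 1 - 2) := Real.rpow_nonneg (by positivity) _
          linarith
  -- combine
  have hexp : Real.exp (∑ j ∈ Finset.Icc 2 h, (p - 1) * (j : ℝ) ^ (-p)) ≤ Real.exp 1 :=
    Real.exp_le_exp.2 hsumb
  have hprodnn : 0 ≤ ∏ j ∈ Finset.Icc 2 h,
      (1 + (j : ℝ) ^ (-p) / ((j : ℝ) ^ (p - 1) * ∑' i : ℕ, ((j + i : ℕ) : ℝ) ^ (-p))) := by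
    apply Finset.prod_nonneg
    intro j hj
    rw [Finset.mem_Icc] at hj
    have hj1 : (1:ℕ) ≤ j := le_trans (by norm_num) hj.1
    have hjR : (1:ℝ) ≤ (j:ℝ) := by exact_mod_cast hj1
    have hΓ := tail_lower p hp j hj1
    have hΓpos : (0:ℝ) < ∑' i : ℕ, ((j + i : ℕ) : ℝ) ^ (-p) :=
      lt_of_lt_of_le (by positivity) hΓ
    positivity
  calc (∑' k : ℕ, ((h + 1 + k : ℕ) : ℝ) ^ (-p)) *
      ∏ j ∈ Finset.Icc 2 h,
        (1 + (j : ℝ) ^ (-p) / ((j : ℝ) ^ (p - 1) * ∑' i : ℕ, ((j + i : ℕ) : ℝ) ^ (-p)))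
      ≤ (1 / (p - 1)) * Real.exp 1 :=
        mul_le_mul htail (hprod.trans hexp) hprodnn (by positivity)
    _ = Real.exp 1 * 1 / (p - 1) := by ring
    _ ≤ Real.exp 1 * p / (p - 1) := by
        have h1 : (1:ℝ) ≤ p := hp.le
        gcongr
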